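/- arXiv:2106.16197 — 5 statements merged into one kernel-verified Lean document; each statement's English description precedes it below -/
import Mathlib

section
/- Let n ≥ 1, let v₀ be a real n-dimensional column vector, and let A₁,…,A_k be real n×n matrices. With aug and the augmentation A ↦ A' defined as follows — aug(v) is the (n+1)-dimensional vector whose first n entries are those of v and whose last entry is 1 − ζ(v); A' is the (n+1)×(n+1) matrix whose top-left n×n block is A, whose last column is (0,…,0,1)ᵀ, and whose last row has j-th entry (j ≤ n) equal to 1 − ζ(c_j) for c_j the j-th column of A — we have A_k' A_{k−1}' ⋯ A₁' · aug(v₀) = aug(A_k A_{k−1} ⋯ A₁ · v₀). -/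
open Matrix

/-- `ζ(v)`: the sum of all entries of a vector `v`. -/
noncomputable def zeta {n : ℕ} (v : Fin n → ℝ) : ℝ := ∑ i, v i

/-- The augmentation of an `n`-dimensional real vector `v`: the `(n+1)`-dimensional
vector whose first `n` entries are those of `v` and whose last entry is `1 − ζ(v)`. -/
noncomputable def augV {n : ℕ} (v : Fin n → ℝ) : Fin (n + 1) → ℝ :=
  Fin.snoc v (1 - zeta v)

/-- The augmentation of an `n × n` real matrix `A`: the `(n+1) × (n+1)` matrix whose
top-left `n × n` block is `A`, whose last column is `(0, …, 0, 1)ᵀ`, and whose last row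
has `j`-th entry (for `j ≤ n`) equal to `1 − ζ(c_j)`, where `c_j` is the `j`-th column
of `A`. -/
noncomputable def augM {n : ℕ} (A : Matrix (Fin n) (Fin n) ℝ) :
    Matrix (Fin (n + 1)) (Fin (n + 1)) ℝ :=
  Matrix.of fun i j =>
    Fin.lastCases
      (Fin.lastCases 1 (fun j' => 1 - zeta (fun r => A r j')) j)
      (fun i' => Fin.lastCases 0 (fun j' => A i' j') j) i

theorem augM_mulVec_augV {n : ℕ} (A : Matrix (Fin n) (Fin n) ℝ) (v : Fin n → ℝ) :
    augM A *ᵥ augV v = augV (A *ᵥ v) := by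
  funext i
  simp only [Matrix.mulVec, dotProduct, augM, augV, Matrix.of_apply]
  induction i using Fin.lastCases with
  | last =>
      simp only [Fin.lastCases_last, Fin.sum_univ_castSucc, Fin.snoc_castSucc,
        Fin.snoc_last, Fin.lastCases_last, Fin.lastCases_castSucc, zeta,
        Matrix.mulVec, dotProduct]
      rw [Finset.sum_comm]
      simp only [sub_mul, one_mul, Finset.sum_sub_distrib, Finset.mul_sum]
      ring_nf
      rw [show (∑ x : Fin n, (∑ y : Fin n, A y x) * v x)
          = ∑ x : Fin n, ∑ y : Fin n, A y x * v x by
        exact Finset.sum_congr rfl fun x _ => Finset.sum_mul .., Finset.sum_comm]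
  | cast i' =>
      simp only [Fin.lastCases_castSucc, Fin.sum_univ_castSucc, Fin.snoc_castSucc,
        Fin.snoc_last, Fin.lastCases_last, Fin.lastCases_castSucc, Matrix.mulVec,
        dotProduct]
      simp

/-- For a list of matrices `As = [A_k, A_{k−1}, …, A₁]` (so that `As.prod = A_k ⋯ A₁`),
we have `A_k' A_{k−1}' ⋯ A₁' · aug(v₀) = aug(A_k A_{k−1} ⋯ A₁ · v₀)`. -/
theorem augM_prod_mulVec_augV {n : ℕ} (hn : 1 ≤ n) (v₀ : Fin n → ℝ)
    (As : List (Matrix (Fin n) (Fin n) ℝ)) :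
    (As.map augM).prod *ᵥ augV v₀ = augV (As.prod *ᵥ v₀) := by
  induction As with
  | nil => simp
  | cons A As ih =>
      simp only [List.map_cons, List.prod_cons, ← Matrix.mulVec_mulVec, ih,
        augM_mulVec_augV]
end

section
/- Fix integers m ≥ 0 and t ≥ 1. Define the 3×3 real matrices A_¢ = [[1,0,0],[m,1,0],[−m,0,1]], A_a = [[1,0,0],[−1,1,0],[1,0,1]], and A_$ = [[1,−t,−t],[0,t,0],[0,0,t]], and for l ≥ 0 let v_f(l) = A_$ · (A_a)^l · A_¢ · (1,0,0)ᵀ. Then the acceptance probability |v_f(l)[1]| / (|v_f(l)[1]| + |v_f(l)[2]| + |v_f(l)[3]|) equals 1 when l = m, and is at most 1/(2t+1) when l ≠ m. (Hence the language COUNT_m = {a^m} is recognized by a 3-state affine finite automaton with negative one-sided error bound 1/(2t+1).) -/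
open Matrix

/-- The affine operator applied on the left end-marker `¢`. -/
noncomputable def AcentC (m : ℕ) : Matrix (Fin 3) (Fin 3) ℝ :=
  !![1, 0, 0; (m : ℝ), 1, 0; -(m : ℝ), 0, 1]

/-- The affine operator applied on each input symbol `a`. -/
noncomputable def AaC : Matrix (Fin 3) (Fin 3) ℝ :=
  !![1, 0, 0; -1, 1, 0; 1, 0, 1]

/-- The affine operator applied on the right end-marker `$`. -/
noncomputable def AdollarC (t : ℤ) : Matrix (Fin 3) (Fin 3) ℝ :=
  !![1, -(t : ℝ), -(t : ℝ); 0, (t : ℝ), 0; 0, 0, (t : ℝ)]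

/-- The final affine state on the input `a^l`. -/
noncomputable def vfC (m : ℕ) (t : ℤ) (l : ℕ) : Fin 3 → ℝ :=
  (AdollarC t * AaC ^ l * AcentC m) *ᵥ ![1, 0, 0]

/-- The acceptance probability (accepting state: the first state). -/
noncomputable def probC (m : ℕ) (t : ℤ) (l : ℕ) : ℝ :=
  |vfC m t l 0| / (|vfC m t l 0| + |vfC m t l 1| + |vfC m t l 2|)

lemma AaC_pow (l : ℕ) : AaC ^ l = !![1, 0, 0; -(l : ℝ), 1, 0; (l : ℝ), 0, 1] := by
  induction l with
  | zero => simp [Matrix.one_fin_three]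
  | succ n ih =>
    rw [pow_succ, ih, AaC]
    ext i j
    fin_cases i <;> fin_cases j <;>
      simp [Matrix.mul_apply, Fin.sum_univ_three] <;> push_cast <;> ring

lemma vfC_eq (m : ℕ) (t : ℤ) (l : ℕ) :
    vfC m t l = ![1, (t : ℝ) * ((m : ℝ) - l), (t : ℝ) * ((l : ℝ) - m)] := by
  rw [vfC, AaC_pow]
  ext i
  fin_cases i <;>
    simp [AdollarC, AcentC, Matrix.mulVec, Matrix.mul_apply, dotProduct,
      Fin.sum_univ_three] <;> ring

/-- The acceptance probability equals `1` when `l = m`, and is at most `1/(2t+1)`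
when `l ≠ m`: the language `COUNT_m = {a^m}` is recognized by a 3-state AfA with
negative one-sided error bound `1/(2t+1)`. -/
theorem count_recognized_with_one_sided_error (m : ℕ) (t : ℤ) (ht : 1 ≤ t) (l : ℕ) :
    (l = m → probC m t l = 1) ∧
    (l ≠ m → probC m t l ≤ 1 / (2 * (t : ℝ) + 1)) := by
  have htR : (1 : ℝ) ≤ (t : ℝ) := by exact_mod_cast ht
  have htpos : (0 : ℝ) < t := lt_of_lt_of_le one_pos htR
  have h0 : vfC m t l 0 = 1 := by rw [vfC_eq]; rfl
  have h1 : vfC m t l 1 = (t : ℝ) * ((m : ℝ) - l) := by rw [vfC_eq]; rfl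
  have h2 : vfC m t l 2 = (t : ℝ) * ((l : ℝ) - m) := by rw [vfC_eq]; rfl
  have habs1 : |vfC m t l 1| = (t : ℝ) * |(m : ℝ) - l| := by
    rw [h1, abs_mul, abs_of_pos htpos]
  have habs2 : |vfC m t l 2| = (t : ℝ) * |(m : ℝ) - l| := by
    rw [h2, abs_mul, abs_of_pos htpos, abs_sub_comm]
  have hprob : probC m t l = 1 / (1 + 2 * (t : ℝ) * |(m : ℝ) - l|) := by
    rw [probC, h0, habs1, habs2, abs_one]; ring_nf
  constructor
  · rintro rfl
    simp [hprob]
  · intro hne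
    have hd : (1 : ℝ) ≤ |(m : ℝ) - l| := by
      have : (m : ℝ) ≠ l := by exact_mod_cast (Ne.symm hne)
      have hneZ : (m : ℤ) ≠ (l : ℤ) := by exact_mod_cast Ne.symm hne
      have hz : (1 : ℤ) ≤ |(m : ℤ) - l| := by
        rcases abs_cases ((m : ℤ) - l) with ⟨h, _⟩ | ⟨h, _⟩ <;> omega
      have : ((1 : ℤ) : ℝ) ≤ (|(m : ℤ) - l| : ℝ) := by exact_mod_cast hz
      simpa [abs_sub_comm] using this
    rw [hprob]
    apply one_div_le_one_div_of_le
    · positivity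
    · nlinarith
end

section
/- Let L be a language recognized by an n-state nondeterministic finite automaton, where n > 1, and let t ≥ 1 be an integer. Then there is an (n+1)-state affine finite automaton M (with real transition matrices whose columns each sum to 1, an initial affine state, and accepting state set {s₁, s₂}) such that every x ∈ L is accepted by M with probability at least 2t/(2t+1) and every x ∉ L is accepted by M with probability 0. In other words, L is recognized by an (n+1)-state AfA with positive one-sided error bound 1/(2t+1), which can be made arbitrarily small. -/
open Matrix

/-- A nondeterministic finite automaton with `n` states over alphabet `α`:
a transition function `δ`, an initial state, and a set of accepting states. -/
structure NFAb (α : Type) (n : ℕ) where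
  δ : Fin n → α → Finset (Fin n)
  start : Fin n
  accept : Finset (Fin n)

/-- `q` is a complete nondeterministic computation path of the transition function `δ`
on the input string `x`: `q_r ∈ δ(q_{r−1}, x_r)` for all `1 ≤ r ≤ |x|`. -/
def IsPath {α : Type} {n : ℕ} (δ : Fin n → α → Finset (Fin n))
    (x : List α) (q : Fin (x.length + 1) → Fin n) : Prop :=
  ∀ r : Fin x.length, q r.succ ∈ δ (q r.castSucc) (x.get r)

/-- The NFA accepts `x` if some computation path on `x` starting at the initial state
ends in an accepting state. -/
def NFAb.Accepts {α : Type} {n : ℕ} (M : NFAb α n) (x : List α) : Prop :=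
  ∃ q : Fin (x.length + 1) → Fin n,
    q 0 = M.start ∧ IsPath M.δ x q ∧ q (Fin.last x.length) ∈ M.accept

/-- The number of accepting nondeterministic computation paths of the NFA on `x`. -/
noncomputable def NFAb.accPathCount {α : Type} {n : ℕ} (M : NFAb α n) (x : List α) : ℕ :=
  Nat.card {q : Fin (x.length + 1) → Fin n //
    q 0 = M.start ∧ IsPath M.δ x q ∧ q (Fin.last x.length) ∈ M.accept}

/-- An affine finite automaton (AfA) with `N` states: an initial affine state (entry sum
`1`), an affine operator (each column summing to `1`) for the left end-marker `¢`, for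
each input symbol, and for the right end-marker `$`, and a set of accepting states. -/
structure AfA (α : Type) (N : ℕ) where
  init : Fin N → ℝ
  init_sum : ∑ i, init i = 1
  opL : Matrix (Fin N) (Fin N) ℝ
  op : α → Matrix (Fin N) (Fin N) ℝ
  opR : Matrix (Fin N) (Fin N) ℝ
  opL_affine : ∀ j, ∑ i, opL i j = 1
  op_affine : ∀ a j, ∑ i, op a i j = 1
  opR_affine : ∀ j, ∑ i, opR i j = 1
  accept : Finset (Fin N)

/-- The final state of the AfA on input `x`: the initial state multiplied by the
operators of `¢`, the input symbols, and `$`, in order. -/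
noncomputable def AfA.final {α : Type} {N : ℕ} (M : AfA α N) (x : List α) : Fin N → ℝ :=
  M.opR *ᵥ x.foldl (fun v a => M.op a *ᵥ v) (M.opL *ᵥ M.init)

/-- The acceptance probability of the AfA on input `x`: the sum of the absolute values
of the final-state entries at accepting states, divided by the ℓ₁-norm of the final
state. -/
noncomputable def AfA.prob {α : Type} {N : ℕ} (M : AfA α N) (x : List α) : ℝ :=
  (∑ i ∈ M.accept, |M.final x i|) / (∑ i, |M.final x i|)

namespace NfaAfaAux

variable {α : Type} {n : ℕ}

/-- One nondeterministic counting step. -/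
def step (N : NFAb α n) (a : α) (u : Fin n → ℕ) : Fin n → ℕ :=
  fun i => ∑ j, if i ∈ N.δ j a then u j else 0

lemma step_ne_zero_iff (N : NFAb α n) (a : α) (u : Fin n → ℕ) (i : Fin n) :
    step N a u i ≠ 0 ↔ ∃ k, i ∈ N.δ k a ∧ u k ≠ 0 := by
  unfold step
  rw [← Finset.sum_filter]
  rw [Ne, Finset.sum_eq_zero_iff]
  push_neg
  constructor
  · rintro ⟨k, hk, hk0⟩
    exact ⟨k, (Finset.mem_filter.mp hk).2, hk0⟩
  · rintro ⟨k, hk, hk0⟩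
    exact ⟨k, Finset.mem_filter.mpr ⟨Finset.mem_univ _, hk⟩, hk0⟩

lemma foldl_ne_zero_iff (N : NFAb α n) (x : List α) (u : Fin n → ℕ) (i : Fin n) :
    (x.foldl (fun v a => step N a v) u) i ≠ 0 ↔
    ∃ q : Fin (x.length + 1) → Fin n,
      u (q 0) ≠ 0 ∧ IsPath N.δ x q ∧ q (Fin.last x.length) = i := by
  induction x generalizing u with
  | nil =>
      simp only [List.foldl_nil, List.length_nil]
      constructor
      · intro h
        refine ⟨fun _ => i, ?_, ?_, rfl⟩
        · simpa using h
        · intro r; exact r.elim0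
      · rintro ⟨q, hq0, -, hql⟩
        have : q 0 = i := by
          have : (0 : Fin 1) = Fin.last 0 := rfl
          rw [this, hql]
        rwa [this] at hq0
  | cons a x ih =>
      simp only [List.foldl_cons, List.length_cons]
      rw [ih]
      constructor
      · rintro ⟨q, hq0, hpath, hql⟩
        obtain ⟨k, hk, huk⟩ := (step_ne_zero_iff N a u (q 0)).mp hq0
        refine ⟨Fin.cases k q, by simpa using huk, ?_, ?_⟩
        · intro r
          induction r using Fin.cases with
          | zero =>
              beta_reduce
              rw [Fin.cases_succ]
              simpa using hk
          | succ s =>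
              have h1 : (Fin.succ s).castSucc = (Fin.castSucc s).succ :=
                (Fin.succ_castSucc s).symm
              simp only [h1, Fin.cases_succ]
              simpa using hpath s
        · show Fin.cases k q (Fin.last (x.length + 1)) = i
          rw [show Fin.last (x.length + 1) = (Fin.last x.length).succ from rfl,
            Fin.cases_succ, hql]
      · rintro ⟨q, hq0, hpath, hql⟩
        refine ⟨fun r => q r.succ, ?_, ?_, ?_⟩
        · rw [step_ne_zero_iff]
          refine ⟨q 0, ?_, hq0⟩
          have := hpath (0 : Fin (x.length + 1))
          simpa using this
        · intro s
          have h1 : (Fin.succ s).castSucc = (Fin.castSucc s).succ :=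
            (Fin.succ_castSucc s).symm
          have := hpath (s.succ : Fin (x.length + 1))
          simp only [h1] at this ⊢
          simpa using this
        · have : Fin.last (x.length + 1) = (Fin.last x.length).succ := rfl
          rw [← hql, this]

/-- The vector of path counts of the NFA on `x`. -/
def cnt (N : NFAb α n) (x : List α) : Fin n → ℕ :=
  x.foldl (fun v a => step N a v) (fun i => if i = N.start then 1 else 0)

lemma accepts_iff_cnt (N : NFAb α n) (x : List α) :
    N.Accepts x ↔ ∃ j ∈ N.accept, cnt N x j ≠ 0 := by
  constructor
  · rintro ⟨q, hq0, hp, hqa⟩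
    refine ⟨q (Fin.last x.length), hqa, ?_⟩
    rw [cnt, foldl_ne_zero_iff]
    exact ⟨q, by simp [hq0], hp, rfl⟩
  · rintro ⟨j, hj, hcnt⟩
    rw [cnt, foldl_ne_zero_iff] at hcnt
    obtain ⟨q, hq0, hp, hql⟩ := hcnt
    have hq0' : q 0 = N.start := by
      by_contra h
      simp [h] at hq0
    exact ⟨q, hq0', hp, hql ▸ hj⟩

/-- The symbol operator of the simulating AfA. -/
noncomputable def opA (N : NFAb α n) (a : α) : Matrix (Fin (n+1)) (Fin (n+1)) ℝ :=
  Matrix.of fun i j =>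
    Fin.lastCases (if i = Fin.last n then 1 else 0)
      (fun j' => Fin.lastCases ((1 : ℝ) - (N.δ j' a).card)
        (fun i' => if i' ∈ N.δ j' a then 1 else 0) i) j

/-- The final (right end-marker) operator of the simulating AfA. -/
noncomputable def opF (N : NFAb α n) (t : ℝ) : Matrix (Fin (n+1)) (Fin (n+1)) ℝ :=
  Matrix.of fun i j =>
    Fin.lastCases (if i = Fin.last n then 1 else 0)
      (fun j' =>
        (if j' ∈ N.accept then ((if i = 0 then t else 0) + (if i = 1 then -t else 0)) else 0)
          + (if i = Fin.last n then 1 else 0)) j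

lemma opA_affine (N : NFAb α n) (a : α) (j : Fin (n+1)) : ∑ i, opA N a i j = 1 := by
  induction j using Fin.lastCases with
  | last => simp [opA, Finset.sum_ite_eq']
  | cast j' =>
      simp only [opA, Matrix.of_apply, Fin.lastCases_castSucc]
      rw [Fin.sum_univ_castSucc]
      simp only [Fin.lastCases_last, Fin.lastCases_castSucc]
      rw [Finset.sum_ite_mem, Finset.univ_inter]
      simp

lemma opF_affine (N : NFAb α n) (t : ℝ) (j : Fin (n+1)) : ∑ i, opF N t i j = 1 := by
  induction j using Fin.lastCases with
  | last => simp [opF, Finset.sum_ite_eq']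
  | cast j' =>
      simp only [opF, Matrix.of_apply, Fin.lastCases_castSucc]
      rw [Finset.sum_add_distrib, Finset.sum_ite_eq']
      by_cases h : j' ∈ N.accept
      · simp [h, Finset.sum_add_distrib, Finset.sum_ite_eq']
      · simp [h]

lemma sum_mulVec_affine {m : ℕ} (A : Matrix (Fin m) (Fin m) ℝ)
    (h : ∀ j, ∑ i, A i j = 1) (v : Fin m → ℝ) :
    ∑ i, (A *ᵥ v) i = ∑ j, v j := by
  simp only [mulVec, dotProduct]
  rw [Finset.sum_comm]
  refine Finset.sum_congr rfl fun j _ => ?_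
  rw [← Finset.sum_mul, h j, one_mul]

/-- After reading `x`, the first `n` coordinates hold the path counts. -/
lemma foldl_opA (N : NFAb α n) (x : List α) (u : Fin n → ℕ) (w : Fin (n+1) → ℝ)
    (hw : ∀ i : Fin n, w (Fin.castSucc i) = (u i : ℝ)) (i : Fin n) :
    (x.foldl (fun v a => opA N a *ᵥ v) w) (Fin.castSucc i)
      = ((x.foldl (fun v a => step N a v) u) i : ℝ) := by
  induction x generalizing u w with
  | nil => simpa using hw i
  | cons a x ih =>
      simp only [List.foldl_cons]
      refine ih (step N a u) _ (fun i' => ?_)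
      simp only [mulVec, dotProduct]
      rw [Fin.sum_univ_castSucc]
      simp only [opA, Matrix.of_apply, Fin.lastCases_castSucc, Fin.lastCases_last]
      have hne : Fin.castSucc i' ≠ Fin.last n := (Fin.castSucc_lt_last i').ne
      rw [if_neg hne, zero_mul, add_zero]
      simp only [hw, step]
      push_cast
      refine Finset.sum_congr rfl fun j _ => ?_
      by_cases h : i' ∈ N.δ j a <;> simp [h]

lemma foldl_opA_sum (N : NFAb α n) (x : List α) (w : Fin (n+1) → ℝ)
    (hw : ∑ i, w i = 1) :
    ∑ i, (x.foldl (fun v a => opA N a *ᵥ v) w) i = 1 := by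
  induction x generalizing w with
  | nil => simpa using hw
  | cons a x ih =>
      simp only [List.foldl_cons]
      refine ih _ ?_
      rw [sum_mulVec_affine _ (opA_affine N a) w, hw]

/-- The simulating AfA. -/
noncomputable def afaOf (N : NFAb α n) (t : ℝ) : AfA α (n + 1) where
  init := fun i => if i = Fin.castSucc N.start then 1 else 0
  init_sum := by rw [Finset.sum_ite_eq']; simp
  opL := 1
  op := opA N
  opR := opF N t
  opL_affine := fun j => by simp [Matrix.one_apply, Finset.sum_ite_eq']
  op_affine := fun a j => opA_affine N a j
  opR_affine := fun j => opF_affine N t j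
  accept := {0, 1}

lemma final_afaOf (N : NFAb α n) (t : ℝ) (x : List α) (i : Fin (n+1)) :
    (afaOf N t).final x i =
      (if i = 0 then t * (∑ j ∈ N.accept, (cnt N x j : ℝ)) else 0)
      + (if i = 1 then -(t * (∑ j ∈ N.accept, (cnt N x j : ℝ))) else 0)
      + (if i = Fin.last n then 1 else 0) := by
  classical
  have hfe : (afaOf N t).final x
      = opF N t *ᵥ x.foldl (fun v a => opA N a *ᵥ v)
          (fun i => if i = Fin.castSucc N.start then 1 else 0) := by
    simp only [AfA.final, afaOf, Matrix.one_mulVec]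
  set w := x.foldl (fun v a => opA N a *ᵥ v)
      (fun i => if i = Fin.castSucc N.start then (1 : ℝ) else 0) with hwdef
  have hcnt : ∀ i' : Fin n, w (Fin.castSucc i') = (cnt N x i' : ℝ) := by
    intro i'
    refine foldl_opA N x _ _ (fun k => ?_) i'
    by_cases h : k = N.start
    · simp [h]
    · simp [h, fun hc => h (Fin.castSucc_injective n hc)]
  have hsum : ∑ j, w j = 1 := by
    refine foldl_opA_sum N x _ ?_
    rw [Finset.sum_ite_eq']
    simp
  rw [hfe]
  set c : ℝ := ∑ j ∈ N.accept, (cnt N x j : ℝ) with hc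
  have hwa : ∑ j ∈ N.accept, w (Fin.castSucc j) = c := by
    rw [hc]
    exact Finset.sum_congr rfl fun j _ => hcnt j
  rw [Fin.sum_univ_castSucc] at hsum
  simp only [mulVec, dotProduct]
  rw [Fin.sum_univ_castSucc]
  simp only [opF, Matrix.of_apply, Fin.lastCases_castSucc, Fin.lastCases_last]
  set P : ℝ := (if i = 0 then t else 0) + (if i = 1 then -t else 0) with hP
  set Q : ℝ := if i = Fin.last n then 1 else 0 with hQ
  have expand : ∀ j' : Fin n,
      ((if j' ∈ N.accept then P else 0) + Q) * w (Fin.castSucc j')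
        = (if j' ∈ N.accept then P * w (Fin.castSucc j') else 0) + Q * w (Fin.castSucc j') := by
    intro j'
    by_cases h : j' ∈ N.accept <;> simp [h, add_mul]
  rw [Finset.sum_congr rfl (fun j' _ => expand j'), Finset.sum_add_distrib,
    Finset.sum_ite_mem, Finset.univ_inter, ← Finset.mul_sum, hwa, ← Finset.mul_sum]
  have : P * c + Q * ∑ j' : Fin n, w (Fin.castSucc j') + Q * w (Fin.last n)
      = P * c + Q := by
    rw [add_assoc, ← mul_add, hsum, mul_one]
  rw [this, hP, hQ]
  by_cases h0 : i = 0 <;> by_cases h1 : i = 1 <;> simp [h0, h1] <;> split_ifs <;> ring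

lemma prob_afaOf (N : NFAb α n) (hn : 1 < n) (t : ℝ) (ht : 0 ≤ t) (x : List α) :
    (afaOf N t).prob x =
      2 * t * (∑ j ∈ N.accept, (cnt N x j : ℝ))
        / (2 * t * (∑ j ∈ N.accept, (cnt N x j : ℝ)) + 1) := by
  classical
  obtain ⟨m, rfl⟩ : ∃ m, n = m + 2 := ⟨n - 2, by omega⟩
  set c : ℝ := ∑ j ∈ N.accept, (cnt N x j : ℝ) with hc
  have hc0 : (0 : ℝ) ≤ c := Finset.sum_nonneg fun j _ => Nat.cast_nonneg _
  have htc : (0 : ℝ) ≤ t * c := mul_nonneg ht hc0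
  have h01 : (0 : Fin (m + 3)) ≠ 1 := Fin.zero_ne_one
  have h0l : (0 : Fin (m + 3)) ≠ Fin.last (m + 2) := by
    intro h
    have := congrArg Fin.val h
    simp [Fin.last] at this
  have h1l : (1 : Fin (m + 3)) ≠ Fin.last (m + 2) := by
    intro h
    have := congrArg Fin.val h
    simp [Fin.last, Fin.val_one] at this
  have habs : ∀ i, |(afaOf N t).final x i|
      = (if i = 0 then t * c else 0) + (if i = 1 then t * c else 0)
        + (if i = Fin.last (m + 2) then 1 else 0) := by
    intro i
    rw [final_afaOf, ← hc]
    by_cases h0 : i = 0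
    · subst h0
      simp [h01, h0l, abs_of_nonneg htc]
    by_cases h1 : i = 1
    · subst h1
      have h10 : (1 : Fin (m + 3)) ≠ 0 := fun h => h01 h.symm
      simp [h10, h1l, abs_of_nonneg htc]
    by_cases hl : i = Fin.last (m + 2)
    · subst hl
      simp [h0l.symm, h1l.symm, h0, h1]
    · simp [h0, h1, hl]
  have hnum : ∑ i ∈ (afaOf N t).accept, |(afaOf N t).final x i| = 2 * (t * c) := by
    show ∑ i ∈ ({0, 1} : Finset (Fin (m + 3))), |(afaOf N t).final x i| = 2 * (t * c)
    rw [Finset.sum_pair h01, habs 0, habs 1]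
    rw [if_pos rfl, if_neg h01, if_neg h0l, if_neg (fun h => h01 h.symm), if_pos rfl,
      if_neg h1l]
    ring
  have hden : ∑ i, |(afaOf N t).final x i| = 2 * (t * c) + 1 := by
    rw [Finset.sum_congr rfl (fun i _ => habs i)]
    rw [Finset.sum_add_distrib, Finset.sum_add_distrib,
      Finset.sum_ite_eq', Finset.sum_ite_eq', Finset.sum_ite_eq']
    simp
    ring
  rw [AfA.prob, hnum, hden]
  rw [show (2 : ℝ) * (t * c) = 2 * t * c from by ring]

end NfaAfaAux

/-- If `L` is recognized by an `n`-state NFA with `n > 1` and `t ≥ 1` is an integer,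
then there is an `(n+1)`-state AfA with accepting states `{s₁, s₂}` that accepts every
`x ∈ L` with probability at least `2t/(2t+1)` and every `x ∉ L` with probability `0`:
`L` is recognized by an `(n+1)`-state AfA with positive one-sided error bound
`1/(2t+1)`, which can be made arbitrarily small. -/
theorem nfa_to_afa_one_sided_error {α : Type} (L : Set (List α)) (n : ℕ) (hn : 1 < n)
    (N : NFAb α n) (hrec : ∀ x, x ∈ L ↔ N.Accepts x) (t : ℤ) (ht : 1 ≤ t) :
    ∃ M : AfA α (n + 1), M.accept = {0, 1} ∧
      (∀ x ∈ L, 2 * (t : ℝ) / (2 * (t : ℝ) + 1) ≤ M.prob x) ∧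
      (∀ x ∉ L, M.prob x = 0) := by
  classical
  have ht' : (1 : ℝ) ≤ (t : ℝ) := by exact_mod_cast ht
  refine ⟨NfaAfaAux.afaOf N (t : ℝ), rfl, ?_, ?_⟩
  · intro x hx
    rw [NfaAfaAux.prob_afaOf N hn (t : ℝ) (by linarith) x]
    set c : ℝ := ∑ j ∈ N.accept, (NfaAfaAux.cnt N x j : ℝ) with hc
    have hacc := (hrec x).mp hx
    obtain ⟨j, hj, hcnt⟩ := (NfaAfaAux.accepts_iff_cnt N x).mp hacc
    have hc1 : (1 : ℝ) ≤ c := by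
      have h1 : 1 ≤ ∑ j ∈ N.accept, NfaAfaAux.cnt N x j :=
        le_trans (Nat.one_le_iff_ne_zero.mpr hcnt)
          (Finset.single_le_sum (fun _ _ => Nat.zero_le _) hj)
      have h2 : ((1 : ℕ) : ℝ) ≤ ((∑ j ∈ N.accept, NfaAfaAux.cnt N x j : ℕ) : ℝ) :=
        Nat.cast_le.mpr h1
      rw [hc]
      push_cast at h2 ⊢
      exact h2
    rw [div_le_div_iff₀ (by nlinarith) (by nlinarith)]
    nlinarith
  · intro x hx
    have hacc : ¬ N.Accepts x := fun h => hx ((hrec x).mpr h)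
    have hc : ∑ j ∈ N.accept, (NfaAfaAux.cnt N x j : ℝ) = 0 := by
      refine Finset.sum_eq_zero fun j hj => ?_
      have hz : NfaAfaAux.cnt N x j = 0 := by
        by_contra h
        exact hacc ((NfaAfaAux.accepts_iff_cnt N x).mpr ⟨j, hj, h⟩)
      simp [hz]
    rw [NfaAfaAux.prob_afaOf N hn (t : ℝ) (by linarith) x, hc]
    simp
end

section
/- Let L be a language recognized by an n-state nondeterministic finite automaton N, where n > 1, such that every member of L is accepted by N on exactly one nondeterministic computation path. Then there is an (n+1)-state affine finite automaton that accepts every x ∈ L with probability 1 and every x ∉ L with probability 0; i.e., L is recognized by an (n+1)-state AfA with zero error. -/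
open Matrix

section AuxNFA
open Finset
variable {α : Type} {n : ℕ}

/-- Number of computation paths of `δ` on `x` from state `s` to state `j`. -/
noncomputable def cnt (δ : Fin n → α → Finset (Fin n)) (s : Fin n) (x : List α) (j : Fin n) : ℕ :=
  Nat.card {q : Fin (x.length + 1) → Fin n // q 0 = s ∧ IsPath δ x q ∧ q (Fin.last x.length) = j}

lemma cnt_nil (δ : Fin n → α → Finset (Fin n)) (s j : Fin n) :
    cnt δ s [] j = if j = s then 1 else 0 := by
  unfold cnt
  split_ifs with h
  · subst h
    rw [Nat.card_eq_one_iff_unique]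
    constructor
    · constructor
      intro a b
      apply Subtype.ext; funext m
      have hm : m = 0 := Subsingleton.elim (α := Fin 1) m 0
      rw [hm, a.2.1, b.2.1]
    · exact ⟨⟨fun _ => j, rfl, fun r => r.elim0, rfl⟩⟩
  · have : IsEmpty {q : Fin (([] : List α).length + 1) → Fin n //
        q 0 = s ∧ IsPath δ [] q ∧ q (Fin.last ([] : List α).length) = j} := by
      constructor; intro a
      have : s = j := by rw [← a.2.1]; exact a.2.2.2
      exact h this.symm
    rw [Nat.card_of_isEmpty]

/-- Paths on `a :: x` from `s` to `j` correspond to paths on `x` to `j` whose first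
state lies in `δ s a`. -/
def pathConsEquiv (δ : Fin n → α → Finset (Fin n)) (s : Fin n) (a : α) (x : List α) (j : Fin n) :
    {q : Fin ((a :: x).length + 1) → Fin n //
      q 0 = s ∧ IsPath δ (a :: x) q ∧ q (Fin.last (a :: x).length) = j} ≃
    {q : Fin (x.length + 1) → Fin n //
      q 0 ∈ δ s a ∧ IsPath δ x q ∧ q (Fin.last x.length) = j} where
  toFun q := ⟨fun m => q.1 m.succ, by
      have h0 := q.2.2.1 (0 : Fin (x.length + 1))
      simpa [q.2.1] using h0, by
      intro r
      have h := q.2.2.1 r.succ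
      simpa using h, by
      simpa [Fin.succ_last] using q.2.2.2⟩
  invFun q := ⟨Fin.cases s q.1, by simp, by
      intro r
      induction r using Fin.cases with
      | zero =>
        simp only [Fin.cases_succ, Fin.castSucc_zero, Fin.cases_zero]
        exact q.2.1
      | succ m =>
        have h := q.2.2.1 m
        simpa using h, by
      rw [show (Fin.last (a::x).length : Fin ((a::x).length + 1)) = (Fin.last x.length).succ
        from (Fin.succ_last _).symm]
      simp only [Fin.cases_succ]
      exact q.2.2.2⟩
  left_inv q := by
    apply Subtype.ext; funext m
    induction m using Fin.cases with
    | zero => simpa using q.2.1.symm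
    | succ k => simp
  right_inv q := by
    apply Subtype.ext; funext m
    simp

lemma cnt_cons (δ : Fin n → α → Finset (Fin n)) (s : Fin n) (a : α) (x : List α) (j : Fin n) :
    cnt δ s (a :: x) j = ∑ i ∈ δ s a, cnt δ i x j := by
  classical
  have h1 : cnt δ s (a::x) j = Nat.card {q : Fin (x.length+1) → Fin n //
      q 0 ∈ δ s a ∧ IsPath δ x q ∧ q (Fin.last x.length) = j} :=
    Nat.card_congr (pathConsEquiv δ s a x j)
  rw [h1, Nat.card_eq_fintype_card, Fintype.card_subtype]
  rw [Finset.card_eq_sum_card_fiberwise (f := fun q => q 0) (t := δ s a)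
    (by intro q hq; simp only [Finset.mem_coe, mem_filter, mem_univ, true_and] at hq; exact hq.1)]
  apply Finset.sum_congr rfl
  intro i hi
  rw [cnt, Nat.card_eq_fintype_card, Fintype.card_subtype]
  congr 1
  ext q
  simp only [mem_filter, mem_univ, true_and]
  constructor
  · rintro ⟨⟨_, hp, hl⟩, h0⟩; exact ⟨h0, hp, hl⟩
  · rintro ⟨h0, hp, hl⟩; exact ⟨⟨h0 ▸ hi, hp, hl⟩, h0⟩

/-- The accepting path count is the sum, over accepting states, of path counts. -/
lemma accPathCount_eq_sum (N : NFAb α n) (x : List α) :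
    N.accPathCount x = ∑ k ∈ N.accept, cnt N.δ N.start x k := by
  classical
  rw [NFAb.accPathCount, Nat.card_eq_fintype_card, Fintype.card_subtype]
  rw [Finset.card_eq_sum_card_fiberwise (f := fun q => q (Fin.last x.length)) (t := N.accept)
    (by intro q hq; simp only [Finset.mem_coe, mem_filter, mem_univ, true_and] at hq; exact hq.2.2)]
  apply Finset.sum_congr rfl
  intro k hk
  rw [cnt, Nat.card_eq_fintype_card, Fintype.card_subtype]
  congr 1
  ext q
  simp only [mem_filter, mem_univ, true_and]
  constructor
  · rintro ⟨⟨h0, hp, _⟩, hl⟩; exact ⟨h0, hp, hl⟩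
  · rintro ⟨h0, hp, hl⟩; exact ⟨⟨h0, hp, hl ▸ hk⟩, hl⟩

/-- The 0/1 transition matrix of symbol `a`. -/
noncomputable def tmat (δ : Fin n → α → Finset (Fin n)) (a : α) : Matrix (Fin n) (Fin n) ℝ :=
  fun i j => if i ∈ δ j a then 1 else 0

lemma fold_eval (δ : Fin n → α → Finset (Fin n)) (x : List α) (v : Fin n → ℝ) (j : Fin n) :
    (x.foldl (fun v a => tmat δ a *ᵥ v) v) j = ∑ s, v s * (cnt δ s x j : ℝ) := by
  induction x generalizing v with
  | nil => simp [cnt_nil]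
  | cons a x ih =>
    simp only [List.foldl_cons]
    rw [ih]
    simp only [cnt_cons, Nat.cast_sum, Finset.mul_sum, mulVec, dotProduct, tmat,
      Finset.sum_mul]
    rw [Finset.sum_comm]
    apply Finset.sum_congr rfl
    intro s _
    simp only [ite_mul, one_mul, zero_mul]
    rw [Finset.sum_ite_mem, Finset.univ_inter]

end AuxNFA

section AuxMat
open Finset
variable {n : ℕ}

/-- Lift an `n×n` matrix to an affine `(n+1)×(n+1)` matrix: the last row makes each
column sum to `1`, and the last column is the unit vector at the last coordinate. -/
noncomputable def affLift (M : Matrix (Fin n) (Fin n) ℝ) :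
    Matrix (Fin (n + 1)) (Fin (n + 1)) ℝ :=
  fun i j =>
    if hj : j = Fin.last n then (if i = Fin.last n then 1 else 0)
    else if hi : i = Fin.last n then 1 - ∑ k, M k (j.castPred hj)
    else M (i.castPred hi) (j.castPred hj)

lemma affLift_affine (M : Matrix (Fin n) (Fin n) ℝ) (j : Fin (n + 1)) :
    ∑ i, affLift M i j = 1 := by
  rcases eq_or_ne j (Fin.last n) with hj | hj
  · subst hj
    simp [affLift]
  · rw [Fin.sum_univ_castSucc]
    have h1 : ∀ i : Fin n, affLift M i.castSucc j = M i (j.castPred hj) := by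
      intro i
      simp [affLift, hj, (Fin.castSucc_lt_last i).ne]
    simp only [h1]
    simp [affLift, hj]

lemma affLift_mulVec (M : Matrix (Fin n) (Fin n) ℝ) (v : Fin (n + 1) → ℝ) (i : Fin n) :
    (affLift M *ᵥ v) i.castSucc = (M *ᵥ (v ∘ Fin.castSucc)) i := by
  simp only [mulVec, dotProduct]
  rw [Fin.sum_univ_castSucc]
  have h1 : ∀ k : Fin n, affLift M i.castSucc k.castSucc = M i k := by
    intro k
    simp [affLift, (Fin.castSucc_lt_last k).ne, (Fin.castSucc_lt_last i).ne]
  have h2 : affLift M i.castSucc (Fin.last n) = 0 := by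
    simp [affLift, (Fin.castSucc_lt_last i).ne]
  simp [h1, h2]

lemma sum_mulVec_eq {m : ℕ} (A : Matrix (Fin m) (Fin m) ℝ) (h : ∀ j, ∑ i, A i j = 1)
    (v : Fin m → ℝ) : ∑ i, (A *ᵥ v) i = ∑ j, v j := by
  simp only [mulVec, dotProduct]
  rw [Finset.sum_comm]
  apply Finset.sum_congr rfl
  intro j _
  rw [← Finset.sum_mul, h j, one_mul]

end AuxMat

section AuxFold
open Finset
variable {α : Type} {n : ℕ}

lemma afold_top (δ : Fin n → α → Finset (Fin n)) (x : List α) (v : Fin (n + 1) → ℝ)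
    (j : Fin n) :
    (x.foldl (fun v a => affLift (tmat δ a) *ᵥ v) v) j.castSucc =
      (x.foldl (fun v a => tmat δ a *ᵥ v) (v ∘ Fin.castSucc)) j := by
  induction x generalizing v with
  | nil => rfl
  | cons a x ih =>
    simp only [List.foldl_cons]
    rw [ih]
    have h : (affLift (tmat δ a) *ᵥ v) ∘ Fin.castSucc = tmat δ a *ᵥ (v ∘ Fin.castSucc) :=
      funext fun k => affLift_mulVec _ _ k
    rw [h]

lemma afold_sum (δ : Fin n → α → Finset (Fin n)) (x : List α) (v : Fin (n + 1) → ℝ) :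
    ∑ i, (x.foldl (fun v a => affLift (tmat δ a) *ᵥ v) v) i = ∑ i, v i := by
  induction x generalizing v with
  | nil => rfl
  | cons a x ih =>
    simp only [List.foldl_cons]
    rw [ih, sum_mulVec_eq _ (affLift_affine (tmat δ a)) v]

end AuxFold

/-- If `L` is recognized by an `n`-state NFA with `n > 1` that accepts every member of
`L` on exactly one nondeterministic computation path, then `L` is recognized by an
`(n+1)`-state AfA with zero error: every member is accepted with probability `1` and
every non-member with probability `0`. -/
theorem nfa_single_path_to_afa_zero_error {α : Type} (L : Set (List α)) (n : ℕ)
    (hn : 1 < n) (N : NFAb α n) (hrec : ∀ x, x ∈ L ↔ N.Accepts x)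
    (hone : ∀ x ∈ L, N.accPathCount x = 1) :
    ∃ M : AfA α (n + 1),
      (∀ x ∈ L, M.prob x = 1) ∧ (∀ x ∉ L, M.prob x = 0) := by
  classical
  have h01 : (0 : Fin (n + 1)) ≠ 1 := by
    intro h
    have := congrArg Fin.val h
    rw [Fin.val_zero, Fin.val_one'] at this
    rw [Nat.mod_eq_of_lt (by omega)] at this
    omega
  -- the row vector picking out accepting (lifted) coordinates
  set w : Fin (n + 1) → ℝ := fun j =>
    if hj : j = Fin.last n then 0 else if j.castPred hj ∈ N.accept then 1 else 0 with hw
  set M : AfA α (n + 1) :=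
    { init := fun i => if i = (N.start).castSucc then 1 else 0
      init_sum := by simp
      opL := 1
      op := fun a => affLift (tmat N.δ a)
      opR := fun i j => (if i = 0 then w j else 0) + (if i = 1 then 1 - w j else 0)
      opL_affine := by intro j; simp [Matrix.one_apply]
      op_affine := fun a j => affLift_affine _ j
      opR_affine := by
        intro j
        rw [Finset.sum_add_distrib]
        simp
      accept := {0} } with hM
  have hacc : M.accept = {0} := rfl
  -- the final vector, in terms of the accepting path count
  have hfin : ∀ x : List α, ∀ i : Fin (n + 1),
      M.final x i = (if i = 0 then (N.accPathCount x : ℝ) else 0)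
        + (if i = 1 then 1 - (N.accPathCount x : ℝ) else 0) := by
    intro x i
    have hop : M.opL *ᵥ M.init = M.init := by rw [hM]; exact one_mulVec _
    set u : Fin (n + 1) → ℝ := x.foldl (fun v a => M.op a *ᵥ v) (M.opL *ᵥ M.init) with hu
    have hufold : u = x.foldl (fun v a => affLift (tmat N.δ a) *ᵥ v) M.init := by
      rw [hu, hop]
    -- entries of u at lifted coordinates
    have hutop : ∀ k : Fin n, u k.castSucc = (cnt N.δ N.start x k : ℝ) := by
      intro k
      rw [hufold, afold_top, fold_eval]
      have hiv : ∀ s : Fin n, (M.init ∘ Fin.castSucc) s = if s = N.start then 1 else 0 := by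
        intro s
        by_cases hs : s = N.start
        · simp [hM, hs]
        · simp [hM, Function.comp, hs, Fin.castSucc_inj.ne.mpr hs]
      simp only [hiv]; simp
    -- total sum of u is 1
    have husum : ∑ i, u i = 1 := by
      rw [hufold, afold_sum]
      simp [hM]
    -- the weighted sum picks out the accepting path count
    have hwA : ∑ j, w j * u j = (N.accPathCount x : ℝ) := by
      rw [Fin.sum_univ_castSucc]
      have hlast : w (Fin.last n) = 0 := by simp [hw]
      rw [hlast, zero_mul, add_zero]
      have hcs : ∀ k : Fin n, w k.castSucc = if k ∈ N.accept then 1 else 0 := by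
        intro k
        simp [hw, (Fin.castSucc_lt_last k).ne]
        exact if_congr Iff.rfl rfl rfl
      rw [accPathCount_eq_sum, Nat.cast_sum]
      simp only [hcs, hutop, ite_mul, one_mul, zero_mul]
      rw [Finset.sum_ite_mem, Finset.univ_inter]
    have hfe : M.final x i = ∑ j, M.opR i j * u j := by
      rw [AfA.final, ← hu]; rfl
    have hwB : ∑ j, (1 - w j) * u j = 1 - (N.accPathCount x : ℝ) := by
      simp only [sub_mul, one_mul]
      rw [Finset.sum_sub_distrib, husum, hwA]
    rw [hfe]
    have hopR : ∀ j, M.opR i j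
        = (if i = 0 then w j else 0) + (if i = 1 then 1 - w j else 0) := fun j => rfl
    have e1 : ∀ j : Fin (n + 1), (if i = 0 then w j else 0)
        = (if i = 0 then (1 : ℝ) else 0) * w j := by intro j; split <;> simp
    have e2 : ∀ j : Fin (n + 1), (if i = 1 then 1 - w j else 0)
        = (if i = 1 then (1 : ℝ) else 0) * (1 - w j) := by intro j; split <;> simp
    simp only [hopR, e1, e2, add_mul, mul_assoc]
    rw [Finset.sum_add_distrib, ← Finset.mul_sum, ← Finset.mul_sum, hwA, hwB]
    split_ifs <;> ring
  refine ⟨M, ?_, ?_⟩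
  · -- members accepted with probability 1
    intro x hx
    have hA : (N.accPathCount x : ℝ) = 1 := by rw [hone x hx]; norm_num
    have hf : ∀ i, M.final x i = if i = 0 then 1 else 0 := by
      intro i
      rw [hfin x i, hA]
      by_cases hi0 : i = 0
      · subst hi0
        simp [h01]
      · by_cases hi1 : i = 1 <;> simp [hi0, hi1]
    rw [AfA.prob, hacc, Finset.sum_singleton]
    have habs : ∀ i : Fin (n + 1), |M.final x i| = if i = 0 then 1 else 0 := by
      intro i; rw [hf i]; by_cases hi : i = 0 <;> simp [hi]
    simp [habs]
  · -- non-members accepted with probability 0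
    intro x hx
    have hA : N.accPathCount x = 0 := by
      haveI : IsEmpty {q : Fin (x.length + 1) → Fin n //
          q 0 = N.start ∧ IsPath N.δ x q ∧ q (Fin.last x.length) ∈ N.accept} :=
        ⟨fun q => hx ((hrec x).mpr ⟨q.1, q.2.1, q.2.2.1, q.2.2.2⟩)⟩
      rw [NFAb.accPathCount, Nat.card_of_isEmpty]
    have hf0 : M.final x 0 = 0 := by
      rw [hfin x 0, hA, if_pos rfl, if_neg h01]
      simp
    rw [AfA.prob, hacc, Finset.sum_singleton, hf0, abs_zero, zero_div]
end

section
/- Let k ≥ 1 be an integer and let L be a language recognized by an n-state nondeterministic finite automaton N, where n > 1, such that every member of L is accepted by N on exactly k nondeterministic computation paths. Then there is an (n+1)-state affine finite automaton that accepts every x ∈ L with probability 1 and every x ∉ L with probability 0; i.e., L is recognized by an (n+1)-state AfA with zero error. -/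
open Matrix

lemma natCard_sigma {ι : Type*} [Fintype ι] (f : ι → Type*) [∀ i, Finite (f i)] :
    Nat.card (Σ i, f i) = ∑ i, Nat.card (f i) := by
  classical
  letI := fun i => Fintype.ofFinite (f i)
  rw [Nat.card_eq_fintype_card, Fintype.card_sigma]
  exact Finset.sum_congr rfl fun i _ => (Nat.card_eq_fintype_card).symm

lemma natCard_fiber_sum {T : Type*} [Finite T] {m : ℕ} (f : T → Fin m) :
    Nat.card T = ∑ i, Nat.card {t : T // f t = i} := by
  rw [← Nat.card_congr (Equiv.sigmaFiberEquiv f), natCard_sigma]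

noncomputable def PC {α : Type} {n : ℕ} (δ : Fin n → α → Finset (Fin n))
    (s : Fin n) (x : List α) (j : Fin n) : ℕ :=
  Nat.card {q : Fin (x.length + 1) → Fin n //
    q 0 = s ∧ IsPath δ x q ∧ q (Fin.last x.length) = j}

lemma PC_nil {α : Type} {n : ℕ} (δ : Fin n → α → Finset (Fin n)) (s j : Fin n) :
    PC δ s [] j = if s = j then 1 else 0 := by
  unfold PC
  split
  · rename_i h
    subst h
    rw [Nat.card_eq_one_iff_unique]
    constructor
    · constructor
      intro ⟨q, hq0, _, hql⟩ ⟨p, hp0, _, hpl⟩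
      apply Subtype.ext
      funext r
      have : r = 0 := Fin.fin_one_eq_zero r
      show q r = p r
      rw [this, hq0, hp0]
    · exact ⟨⟨fun _ => s, rfl, fun r => r.elim0, rfl⟩⟩
  · rename_i h
    rw [Nat.card_eq_zero]
    left
    constructor
    intro ⟨q, hq0, _, hql⟩
    apply h
    rw [← hq0, ← hql]
    rfl

lemma card_cons_fiber {α : Type} {n : ℕ} (δ : Fin n → α → Finset (Fin n))
    (s i : Fin n) (a : α) (x : List α) (j : Fin n) (hi : i ∈ δ s a) :
    Nat.card {q : Fin ((a :: x).length + 1) → Fin n //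
      (q 0 = s ∧ IsPath δ (a :: x) q ∧ q (Fin.last (a :: x).length) = j) ∧ q 1 = i}
      = PC δ i x j := by
  apply Nat.card_congr
  refine ⟨fun ⟨q, ⟨hq0, hqp, hql⟩, hq1⟩ => ⟨fun t => q t.succ, ?_, ?_, ?_⟩,
    fun ⟨p, hp0, hpp, hpl⟩ => ⟨Fin.cases s p, ⟨?_, ?_, ?_⟩, ?_⟩, ?_, ?_⟩
  · show q (Fin.succ (0 : Fin (x.length + 1))) = i
    rw [Fin.succ_zero_eq_one]; exact hq1
  · intro r
    have h := hqp r.succ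
    simp only [List.get_eq_getElem, Fin.val_succ, List.getElem_cons_succ] at h
    show q r.succ.succ ∈ δ (q r.castSucc.succ) (x.get r)
    rw [Fin.succ_castSucc, List.get_eq_getElem]
    exact h
  · show q (Fin.last x.length).succ = j
    rw [Fin.succ_last]; exact hql
  · exact Fin.cases_zero ..
  · intro r
    induction r using Fin.cases with
    | zero =>
      show Fin.cases s p (Fin.succ (0 : Fin (x.length + 1))) ∈
        δ (Fin.cases s p (Fin.castSucc (0 : Fin (x.length + 1)))) ((a :: x).get (0 : Fin (x.length + 1)))
      simp only [List.get_eq_getElem, Fin.val_zero, List.getElem_cons_zero,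
        Fin.castSucc_zero, Fin.cases_zero, Fin.cases_succ, hp0]
      exact hi
    | succ r =>
      show Fin.cases s p r.succ.succ ∈
        δ (Fin.cases s p (Fin.castSucc r.succ)) ((a :: x).get r.succ)
      rw [← Fin.succ_castSucc]
      simp only [List.get_eq_getElem, Fin.val_succ, List.getElem_cons_succ, Fin.cases_succ]
      exact hpp r
  · show Fin.cases s p (Fin.last (x.length + 1)) = j
    rw [← Fin.succ_last, Fin.cases_succ]; exact hpl
  · show Fin.cases s p (Fin.succ (0 : Fin (x.length + 1))) = i
    rw [Fin.cases_succ]; exact hp0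
  · intro ⟨q, ⟨hq0, hqp, hql⟩, hq1⟩
    apply Subtype.ext
    funext r
    show Fin.cases s (fun t => q t.succ) r = q r
    induction r using Fin.cases with
    | zero => rw [Fin.cases_zero, hq0]
    | succ t => rw [Fin.cases_succ]
  · intro ⟨p, hp0, hpp, hpl⟩
    apply Subtype.ext
    funext t
    show Fin.cases s p t.succ = p t
    rw [Fin.cases_succ]

lemma card_cons_fiber_empty {α : Type} {n : ℕ} (δ : Fin n → α → Finset (Fin n))
    (s i : Fin n) (a : α) (x : List α) (j : Fin n) (hi : i ∉ δ s a) :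
    Nat.card {q : Fin ((a :: x).length + 1) → Fin n //
      (q 0 = s ∧ IsPath δ (a :: x) q ∧ q (Fin.last (a :: x).length) = j) ∧ q 1 = i}
      = 0 := by
  rw [Nat.card_eq_zero]
  left
  constructor
  intro ⟨q, ⟨hq0, hqp, hql⟩, hq1⟩
  have h := hqp (0 : Fin (x.length + 1))
  simp only [List.get_eq_getElem, Fin.val_zero, List.getElem_cons_zero,
    Fin.castSucc_zero, Fin.succ_zero_eq_one, hq0, hq1] at h
  exact hi h

lemma PC_cons {α : Type} {n : ℕ} (δ : Fin n → α → Finset (Fin n))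
    (s : Fin n) (a : α) (x : List α) (j : Fin n) :
    PC δ s (a :: x) j = ∑ i ∈ δ s a, PC δ i x j := by
  classical
  unfold PC
  rw [natCard_fiber_sum (f := fun t : {q : Fin ((a :: x).length + 1) → Fin n //
      q 0 = s ∧ IsPath δ (a :: x) q ∧ q (Fin.last (a :: x).length) = j} => t.1 1)]
  have key : ∀ i : Fin n,
      Nat.card {t : {q : Fin ((a :: x).length + 1) → Fin n //
        q 0 = s ∧ IsPath δ (a :: x) q ∧ q (Fin.last (a :: x).length) = j} // t.1 1 = i}
      = if i ∈ δ s a then PC δ i x j else 0 := by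
    intro i
    have e := Equiv.subtypeSubtypeEquivSubtypeInter
      (fun q : Fin ((a :: x).length + 1) → Fin n =>
        q 0 = s ∧ IsPath δ (a :: x) q ∧ q (Fin.last (a :: x).length) = j)
      (fun q => q 1 = i)
    rw [Nat.card_congr e]
    split
    · exact card_cons_fiber δ s i a x j ‹_›
    · exact card_cons_fiber_empty δ s i a x j ‹_›
  simp_rw [key]
  rw [Finset.sum_ite_mem, Finset.univ_inter]
  exact Finset.sum_congr rfl fun _ _ => rfl


lemma accPathCount_eq {α : Type} {n : ℕ} (N : NFAb α n) (x : List α) :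
    N.accPathCount x = ∑ j : Fin n, if j ∈ N.accept then PC N.δ N.start x j else 0 := by
  classical
  unfold NFAb.accPathCount
  rw [natCard_fiber_sum (f := fun t : {q : Fin (x.length + 1) → Fin n //
      q 0 = N.start ∧ IsPath N.δ x q ∧ q (Fin.last x.length) ∈ N.accept} =>
      t.1 (Fin.last x.length))]
  refine Finset.sum_congr rfl fun j _ => ?_
  have e := Equiv.subtypeSubtypeEquivSubtypeInter
    (fun q : Fin (x.length + 1) → Fin n =>
      q 0 = N.start ∧ IsPath N.δ x q ∧ q (Fin.last x.length) ∈ N.accept)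
    (fun q => q (Fin.last x.length) = j)
  rw [Nat.card_congr e]
  split
  · rename_i hj
    apply Nat.card_congr
    apply Equiv.subtypeEquivRight
    intro q
    constructor
    · rintro ⟨⟨h0, hp, _⟩, hl⟩; exact ⟨h0, hp, hl⟩
    · rintro ⟨h0, hp, hl⟩; exact ⟨⟨h0, hp, hl ▸ hj⟩, hl⟩
  · rename_i hj
    rw [Nat.card_eq_zero]
    left
    constructor
    rintro ⟨q, ⟨_, _, hacc⟩, hl⟩
    exact hj (hl ▸ hacc)

lemma sum_mulVec {N : ℕ} (M : Matrix (Fin N) (Fin N) ℝ) (h : ∀ j, ∑ i, M i j = 1)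
    (v : Fin N → ℝ) : ∑ i, (M *ᵥ v) i = ∑ j, v j := by
  simp only [Matrix.mulVec, dotProduct]
  rw [Finset.sum_comm]
  refine Finset.sum_congr rfl fun j _ => ?_
  rw [← Finset.sum_mul, h, one_mul]

/-- The transition matrix of the simulating AfA for symbol `a`. -/
noncomputable def opA {α : Type} {n : ℕ} (δ : Fin n → α → Finset (Fin n)) (a : α) :
    Matrix (Fin (n + 1)) (Fin (n + 1)) ℝ := fun i j =>
  Fin.lastCases (if i = Fin.last n then 1 else 0)
    (fun j' => Fin.lastCases (1 - ((δ j' a).card : ℝ))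
      (fun i' => if i' ∈ δ j' a then 1 else 0) i) j

lemma opA_cast_cast {α : Type} {n : ℕ} (δ : Fin n → α → Finset (Fin n)) (a : α)
    (i' j' : Fin n) :
    opA δ a i'.castSucc j'.castSucc = if i' ∈ δ j' a then 1 else 0 := by
  unfold opA
  rw [Fin.lastCases_castSucc, Fin.lastCases_castSucc]

lemma opA_last_cast {α : Type} {n : ℕ} (δ : Fin n → α → Finset (Fin n)) (a : α)
    (j' : Fin n) :
    opA δ a (Fin.last n) j'.castSucc = 1 - ((δ j' a).card : ℝ) := by
  unfold opA
  rw [Fin.lastCases_castSucc, Fin.lastCases_last]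

lemma opA_col_last {α : Type} {n : ℕ} (δ : Fin n → α → Finset (Fin n)) (a : α)
    (i : Fin (n + 1)) :
    opA δ a i (Fin.last n) = if i = Fin.last n then 1 else 0 := by
  unfold opA
  rw [Fin.lastCases_last]

lemma opA_affine {α : Type} {n : ℕ} (δ : Fin n → α → Finset (Fin n)) (a : α)
    (j : Fin (n + 1)) : ∑ i, opA δ a i j = 1 := by
  classical
  induction j using Fin.lastCases with
  | last => simp [opA_col_last]
  | cast j' =>
    rw [Fin.sum_univ_castSucc]
    simp only [opA_cast_cast, opA_last_cast]
    rw [Finset.sum_ite_mem, Finset.univ_inter, Finset.sum_const, nsmul_eq_mul, mul_one]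
    ring


lemma fold_sum {α : Type} {n : ℕ} (δ : Fin n → α → Finset (Fin n)) (x : List α)
    (v : Fin (n + 1) → ℝ) :
    ∑ i, (x.foldl (fun w a => opA δ a *ᵥ w) v) i = ∑ i, v i := by
  induction x generalizing v with
  | nil => rfl
  | cons a x ih => rw [List.foldl_cons, ih, sum_mulVec _ (opA_affine δ a)]

lemma fold_eq {α : Type} {n : ℕ} (δ : Fin n → α → Finset (Fin n)) (x : List α)
    (v : Fin (n + 1) → ℝ) (j : Fin n) :
    (x.foldl (fun w a => opA δ a *ᵥ w) v) j.castSucc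
      = ∑ s : Fin n, v s.castSucc * (PC δ s x j : ℝ) := by
  classical
  induction x generalizing v with
  | nil =>
    simp only [List.foldl_nil, PC_nil]
    simp [mul_ite, mul_one, mul_zero]
  | cons a x ih =>
    rw [List.foldl_cons, ih]
    have hv : ∀ s : Fin n, (opA δ a *ᵥ v) s.castSucc
        = ∑ t : Fin n, (if s ∈ δ t a then (1:ℝ) else 0) * v t.castSucc := by
      intro s
      show ∑ u, opA δ a s.castSucc u * v u = _
      rw [Fin.sum_univ_castSucc, opA_col_last, if_neg (Fin.castSucc_lt_last s).ne,
        zero_mul, add_zero]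
      exact Finset.sum_congr rfl fun t _ => by rw [opA_cast_cast]
    simp_rw [hv, Finset.sum_mul]
    rw [Finset.sum_comm]
    refine Finset.sum_congr rfl fun t _ => ?_
    rw [PC_cons]
    push_cast
    simp only [ite_mul, one_mul, zero_mul]
    rw [Finset.sum_ite_mem, Finset.univ_inter, Finset.mul_sum]


noncomputable def wvec {α : Type} {n : ℕ} (k : ℕ) (N : NFAb α n) : Fin (n + 1) → ℝ :=
  fun j => Fin.lastCases 0 (fun j' => if j' ∈ N.accept then ((k : ℝ))⁻¹ else 0) j

/-- The simulating affine automaton. -/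
noncomputable def afaM {α : Type} {n : ℕ} (k : ℕ) (N : NFAb α n) (hn : 0 < n) :
    AfA α (n + 1) where
  init i := if i = N.start.castSucc then 1 else 0
  init_sum := by simp
  opL := 1
  opL_affine j := by simp [Matrix.one_apply]
  op a := opA N.δ a
  op_affine a j := opA_affine N.δ a j
  opR i j := Fin.lastCases (1 - wvec k N j)
    (fun i' => if i' = (⟨0, hn⟩ : Fin n) then wvec k N j else 0) i
  opR_affine j := by
    rw [Fin.sum_univ_castSucc]
    simp only [Fin.lastCases_castSucc, Fin.lastCases_last]
    rw [Finset.sum_ite_eq' Finset.univ (⟨0, hn⟩ : Fin n) (fun _ => wvec k N j)]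
    simp
  accept := {(⟨0, hn⟩ : Fin n).castSucc}

lemma afaM_final {α : Type} {n : ℕ} (k : ℕ) (N : NFAb α n) (hn : 0 < n) (x : List α) :
    (afaM k N hn).final x (⟨0, hn⟩ : Fin n).castSucc = (N.accPathCount x : ℝ) / k
  ∧ (afaM k N hn).final x (Fin.last n) = 1 - (N.accPathCount x : ℝ) / k
  ∧ ∀ i' : Fin n, i' ≠ (⟨0, hn⟩ : Fin n) → (afaM k N hn).final x i'.castSucc = 0 := by
  classical
  set v := x.foldl (fun w a => opA N.δ a *ᵥ w) ((afaM k N hn).opL *ᵥ (afaM k N hn).init)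
    with hvdef
  have hfinal : ∀ i, (afaM k N hn).final x i = ∑ u, (afaM k N hn).opR i u * v u := by
    intro i; rfl
  have hv0 : (afaM k N hn).opL *ᵥ (afaM k N hn).init = (afaM k N hn).init := by
    show (1 : Matrix (Fin (n+1)) (Fin (n+1)) ℝ) *ᵥ _ = _
    rw [Matrix.one_mulVec]
  have hvj : ∀ j : Fin n, v j.castSucc = (PC N.δ N.start x j : ℝ) := by
    intro j
    rw [hvdef, fold_eq]
    have : ∀ s : Fin n, ((afaM k N hn).opL *ᵥ (afaM k N hn).init) s.castSucc
        = if s = N.start then (1:ℝ) else 0 := by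
      intro s
      rw [hv0]
      show (if s.castSucc = N.start.castSucc then (1:ℝ) else 0) = _
      simp [Fin.castSucc_inj]
    simp only [this, ite_mul, one_mul, zero_mul]
    rw [Finset.sum_ite_eq' Finset.univ N.start (fun s => (PC N.δ s x j : ℝ))]
    simp
  have hvsum : ∑ i, v i = 1 := by
    rw [hvdef, fold_sum, hv0]
    show ∑ i, (if i = N.start.castSucc then (1:ℝ) else 0) = 1
    simp
  have hS : ∑ u, wvec k N u * v u = (N.accPathCount x : ℝ) / k := by
    rw [Fin.sum_univ_castSucc]
    simp only [wvec, Fin.lastCases_castSucc, Fin.lastCases_last, zero_mul, add_zero]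
    have step : ∀ j' : Fin n, (if j' ∈ N.accept then ((k:ℝ))⁻¹ else 0) * v j'.castSucc
        = (k:ℝ)⁻¹ * ((if j' ∈ N.accept then PC N.δ N.start x j' else 0 : ℕ) : ℝ) := by
      intro j'
      rw [hvj]
      split <;> simp
    simp only [step]
    rw [← Finset.mul_sum, ← Nat.cast_sum, ← accPathCount_eq, div_eq_inv_mul]
  have hlastne : ∀ i' : Fin n, i'.castSucc ≠ Fin.last n := fun i' => (Fin.castSucc_lt_last i').ne
  have hopR : (afaM k N hn).opR = fun i j => Fin.lastCases (1 - wvec k N j)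
      (fun i' => if i' = (⟨0, hn⟩ : Fin n) then wvec k N j else 0) i := rfl
  refine ⟨?_, ?_, ?_⟩
  · rw [hfinal]
    simp only [hopR, Fin.lastCases_castSucc, if_pos rfl]
    exact hS
  · rw [hfinal]
    simp only [hopR, Fin.lastCases_last, sub_mul, one_mul]
    rw [Finset.sum_sub_distrib, hvsum, hS]
  · intro i' hne
    rw [hfinal]
    simp only [hopR, Fin.lastCases_castSucc, if_neg hne]
    simp

/-- If `L` is recognized by an `n`-state NFA with `n > 1` that accepts every member of
`L` on exactly `k ≥ 1` nondeterministic computation paths, then `L` is recognized by an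
`(n+1)`-state AfA with zero error: every member is accepted with probability `1` and
every non-member with probability `0`. -/
theorem nfa_k_paths_to_afa_zero_error {α : Type} (k : ℕ) (hk : 1 ≤ k)
    (L : Set (List α)) (n : ℕ) (hn : 1 < n) (N : NFAb α n)
    (hrec : ∀ x, x ∈ L ↔ N.Accepts x)
    (hk' : ∀ x ∈ L, N.accPathCount x = k) :
    ∃ M : AfA α (n + 1),
      (∀ x ∈ L, M.prob x = 1) ∧ (∀ x ∉ L, M.prob x = 0) := by
  classical
  have hn0 : 0 < n := by omega
  have hkR : ((k : ℝ)) ≠ 0 := Nat.cast_ne_zero.mpr (by omega)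
  have hacc : (afaM k N hn0).accept = {(⟨0, hn0⟩ : Fin n).castSucc} := rfl
  refine ⟨afaM k N hn0, ?_, ?_⟩
  · intro x hx
    obtain ⟨h1, h2, h3⟩ := afaM_final k N hn0 x
    rw [hk' x hx, div_self hkR] at h1 h2
    rw [sub_self] at h2
    unfold AfA.prob
    rw [hacc, Finset.sum_singleton, h1, Fin.sum_univ_castSucc, h2,
      Finset.sum_eq_single_of_mem (⟨0, hn0⟩ : Fin n) (Finset.mem_univ _)
        (fun i' _ hne => by rw [h3 i' hne, abs_zero]), h1]
    norm_num
  · intro x hx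
    have hc : N.accPathCount x = 0 := by
      rw [NFAb.accPathCount, Nat.card_eq_zero]
      left
      constructor
      rintro ⟨q, hq1, hq2, hq3⟩
      exact hx ((hrec x).mpr ⟨q, hq1, hq2, hq3⟩)
    obtain ⟨h1, h2, h3⟩ := afaM_final k N hn0 x
    rw [hc] at h1 h2
    rw [Nat.cast_zero, zero_div] at h1
    rw [Nat.cast_zero, zero_div, sub_zero] at h2
    unfold AfA.prob
    rw [hacc, Finset.sum_singleton, h1, abs_zero, zero_div]
end
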